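/- Factorization property of Q̃-polynomials: for any partition λ = (λ₁,...,λ_r) with all λ_i ≤ n and any i, if λ⁺ = λ ∪ (i,i) denotes the partition obtained by inserting two parts equal to i, then Q̃_{λ⁺}(X) = Q̃_{i,i}(X)·Q̃_λ(X) in ℤ[x₁,...,x_n]. -/

import Mathlib

open MvPolynomial

/-- The `i`-th elementary symmetric polynomial in the variables `{X j : j ∈ S}`,
i.e. `Q̃_i` on the variable set `S`. -/
noncomputable def Qt (S : Finset ℕ) (i : ℕ) : MvPolynomial ℕ ℤ :=
  ∑ t ∈ Finset.powersetCard i S, ∏ j ∈ t, X j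

/-- The two-row `Q̃`-polynomial
`Q̃_{i,j} = Q̃_i Q̃_j + 2 ∑_{k=1}^{j} (-1)^k Q̃_{i+k} Q̃_{j-k}` (for `i ≥ j`). -/
noncomputable def Qtp (S : Finset ℕ) (i j : ℕ) : MvPolynomial ℕ ℤ :=
  Qt S i * Qt S j +
    2 * ∑ k ∈ Finset.Icc 1 j, (-1 : MvPolynomial ℕ ℤ) ^ k * Qt S (i + k) * Qt S (j - k)

/-- Fuel-based Laplace (Pfaffian) recursion for `Q̃_λ` on a list of parts of even
length: `Q̃_ν = ∑_{j} (-1)^{j-1} Q̃_{ν_j,ν_r} Q̃_{ν∖{ν_j,ν_r}}`. -/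
noncomputable def Qpf (S : Finset ℕ) : ℕ → List ℕ → MvPolynomial ℕ ℤ
  | 0, _ => 1
  | fuel + 1, l =>
    if l.length < 2 then 1
    else
      ∑ j ∈ Finset.range (l.length - 1),
        (-1 : MvPolynomial ℕ ℤ) ^ j * Qtp S (l.getD j 0) (l.getLast?.getD 0) *
          Qpf S fuel (l.dropLast.eraseIdx j)

/-- `Q̃_λ` for a partition `λ` (list of parts), padding with a zero part
to make the length even. -/
noncomputable def Qlam (S : Finset ℕ) (l : List ℕ) : MvPolynomial ℕ ℤ :=
  Qpf S (l.length + 1) (if Even l.length then l else l ++ [0])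

namespace QtAux

noncomputable def Pf (S : Finset ℕ) (l : List ℕ) : MvPolynomial ℕ ℤ := Qpf S l.length l

lemma length_dropLast_eraseIdx (l : List ℕ) (j : ℕ) (hj : j < l.length - 1) :
    (l.dropLast.eraseIdx j).length = l.length - 2 := by
  rw [List.length_eraseIdx, List.length_dropLast]
  simp only [hj, if_pos]
  omega

lemma Qpf_fuel (S : Finset ℕ) : ∀ (f g : ℕ) (l : List ℕ), l.length ≤ 2 * f + 1 →
    l.length ≤ 2 * g + 1 → Qpf S f l = Qpf S g l := by
  intro f
  induction f with
  | zero =>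
    intro g l hf hg
    match g with
    | 0 => rfl
    | g + 1 =>
      have : l.length < 2 := by omega
      simp [Qpf, this]
  | succ f IH =>
    intro g l hf hg
    by_cases h2 : l.length < 2
    · match g with
      | 0 => simp [Qpf, h2]
      | g + 1 => simp [Qpf, h2]
    · match g with
      | 0 => omega
      | g + 1 =>
        simp only [Qpf, h2, if_neg, if_false]
        refine Finset.sum_congr rfl (fun j hj => ?_)
        rw [Finset.mem_range] at hj
        have hlen := length_dropLast_eraseIdx l j hj
        rw [IH g (l.dropLast.eraseIdx j) (by omega) (by omega)]

lemma Qpf_eq_Pf (S : Finset ℕ) (f : ℕ) (l : List ℕ) (h : l.length ≤ 2 * f + 1) :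
    Qpf S f l = Pf S l :=
  Qpf_fuel S f l.length l h (by omega)

lemma Pf_short (S : Finset ℕ) (l : List ℕ) (h : l.length < 2) : Pf S l = 1 := by
  unfold Pf
  match hl : l.length with
  | 0 => rfl
  | 1 => simp [Qpf, hl, h]
  | n + 2 => omega

lemma Pf_expand (S : Finset ℕ) (l : List ℕ) (h : 2 ≤ l.length) :
    Pf S l = ∑ j ∈ Finset.range (l.length - 1),
        (-1 : MvPolynomial ℕ ℤ) ^ j * Qtp S (l.getD j 0) (l.getLast?.getD 0) *
          Pf S (l.dropLast.eraseIdx j) := by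
  obtain ⟨m, hm⟩ : ∃ m, l.length = m + 1 := ⟨l.length - 1, by omega⟩
  have h2 : ¬ l.length < 2 := by omega
  conv_lhs => rw [Pf, hm]
  simp only [Qpf, h2, if_false]
  refine Finset.sum_congr rfl (fun j hj => ?_)
  rw [Finset.mem_range] at hj
  have hlen := length_dropLast_eraseIdx l j (by omega)
  rw [Qpf_eq_Pf S m _ (by omega)]



lemma eraseIdx_comm {α : Type*} : ∀ (a : List α) (k j : ℕ), k ≤ j →
    (a.eraseIdx (j + 1)).eraseIdx k = (a.eraseIdx k).eraseIdx j := by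
  intro a
  induction a with
  | nil => intro k j _; simp [List.eraseIdx]
  | cons x xs IH =>
    intro k j hkj
    match k with
    | 0 =>
      match j with
      | j => simp [List.eraseIdx]
    | k + 1 =>
      obtain ⟨j', rfl⟩ : ∃ j', j = j' + 1 := ⟨j - 1, by omega⟩
      simp only [List.eraseIdx]
      rw [IH k j' (by omega)]

lemma getD_eraseIdx_lt (a : List ℕ) {k j : ℕ} (h : k < j) (hj : j < a.length) :
    (a.eraseIdx j).getD k 0 = a.getD k 0 := by
  have h1 : k < (a.eraseIdx j).length := by rw [List.length_eraseIdx]; simp [hj]; omega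
  have h2 : k < a.length := by omega
  rw [List.getD_eq_getElem _ _ h1, List.getD_eq_getElem _ _ h2, List.getElem_eraseIdx]
  simp [h]

lemma getD_eraseIdx_ge (a : List ℕ) {k j : ℕ} (h : j ≤ k) (hk : k + 1 < a.length) :
    (a.eraseIdx j).getD k 0 = a.getD (k + 1) 0 := by
  have h1 : k < (a.eraseIdx j).length := by rw [List.length_eraseIdx]; simp [show j < a.length by omega]; omega
  rw [List.getD_eq_getElem _ _ h1, List.getD_eq_getElem _ _ hk, List.getElem_eraseIdx]
  simp [show ¬ k < j by omega]


open MvPolynomial in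
lemma zero_sum (S : Finset ℕ) (i : ℕ) (a : List ℕ) (ha : Even a.length) :
    ∑ j ∈ Finset.range a.length,
      (-1 : MvPolynomial ℕ ℤ) ^ j * Qtp S (a.getD j 0) i * Pf S (a.eraseIdx j ++ [i]) = 0 := by
  rcases Nat.eq_zero_or_pos a.length with h0 | hpos
  · simp [h0]
  have h2 : 2 ≤ a.length := by rcases ha with ⟨m, hm⟩; omega
  set n := a.length with hn
  have step : ∀ j ∈ Finset.range n,
      (-1 : MvPolynomial ℕ ℤ) ^ j * Qtp S (a.getD j 0) i * Pf S (a.eraseIdx j ++ [i])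
        = ∑ k ∈ Finset.range (n - 1),
            ((-1 : MvPolynomial ℕ ℤ) ^ j * Qtp S (a.getD j 0) i) *
              ((-1 : MvPolynomial ℕ ℤ) ^ k * Qtp S ((a.eraseIdx j).getD k 0) i *
                Pf S ((a.eraseIdx j).eraseIdx k)) := by
    intro j hj
    rw [Finset.mem_range] at hj
    have hlep : (a.eraseIdx j).length = n - 1 := by
      rw [List.length_eraseIdx, if_pos hj]
    have hlen : (a.eraseIdx j ++ [i]).length = n := by
      rw [List.length_append, hlep]; simp; omega
    rw [Pf_expand S _ (by omega), Finset.mul_sum, hlen]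
    refine Finset.sum_congr rfl (fun k hk => ?_)
    rw [Finset.mem_range] at hk
    have hgl : (a.eraseIdx j ++ [i]).getLast?.getD 0 = i := by rw [List.getLast?_concat]; rfl
    have hget : (a.eraseIdx j ++ [i]).getD k 0 = (a.eraseIdx j).getD k 0 :=
      List.getD_append _ _ _ _ (by omega)
    rw [hgl, hget, List.dropLast_concat]
  rw [Finset.sum_congr rfl step, ← Finset.sum_product']
  apply Finset.sum_involution
    (fun p _ => if p.2 < p.1 then (p.2, p.1 - 1) else (p.2 + 1, p.1))
  · rintro ⟨j, k⟩ hp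
    rw [Finset.mem_product, Finset.mem_range, Finset.mem_range] at hp
    obtain ⟨hj, hk⟩ := hp
    dsimp only
    by_cases hc : k < j
    · rw [if_pos hc]
      have e1 : (a.eraseIdx j).getD k 0 = a.getD k 0 := getD_eraseIdx_lt a hc hj
      have e2 : (a.eraseIdx k).getD (j - 1) 0 = a.getD j 0 := by
        have := getD_eraseIdx_ge a (show k ≤ j - 1 by omega) (show (j-1)+1 < a.length by omega)
        rwa [show j - 1 + 1 = j by omega] at this
      have e3 : (a.eraseIdx j).eraseIdx k = (a.eraseIdx k).eraseIdx (j - 1) := by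
        have := eraseIdx_comm a k (j - 1) (by omega)
        rwa [show (j-1)+1 = j by omega] at this
      rw [e1, e2, e3]
      obtain ⟨j', rfl⟩ : ∃ j', j = j' + 1 := ⟨j - 1, by omega⟩
      simp only [Nat.add_sub_cancel]
      ring
    · rw [if_neg hc]
      have e1 : (a.eraseIdx j).getD k 0 = a.getD (k + 1) 0 :=
        getD_eraseIdx_ge a (by omega) (by omega)
      have e2 : (a.eraseIdx (k + 1)).getD j 0 = a.getD j 0 :=
        getD_eraseIdx_lt a (by omega) (by omega)
      have e3 : (a.eraseIdx j).eraseIdx k = (a.eraseIdx (k + 1)).eraseIdx j :=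
        (eraseIdx_comm a j k (by omega)).symm
      rw [e1, e2, e3]
      ring
  · rintro ⟨j, k⟩ hp _
    dsimp only
    by_cases hc : k < j
    · rw [if_pos hc]; simp only [ne_eq, Prod.mk.injEq, not_and]; omega
    · rw [if_neg hc]; simp only [ne_eq, Prod.mk.injEq, not_and]; omega
  · rintro ⟨j, k⟩ hp
    dsimp only
    by_cases hc : k < j
    · rw [if_pos hc]
      rw [if_neg (show ¬ (j - 1 < k) by omega)]
      rw [Prod.ext_iff]
      constructor <;> dsimp only <;> omega
    · rw [if_neg hc]
      rw [if_pos (show j < k + 1 by omega)]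
      rw [Prod.ext_iff]
      constructor <;> dsimp only <;> omega
  · rintro ⟨j, k⟩ hp
    rw [Finset.mem_product, Finset.mem_range, Finset.mem_range] at hp
    dsimp only
    by_cases hc : k < j
    · rw [if_pos hc, Finset.mem_product, Finset.mem_range, Finset.mem_range]
      constructor <;> dsimp only <;> omega
    · rw [if_neg hc, Finset.mem_product, Finset.mem_range, Finset.mem_range]
      constructor <;> dsimp only <;> omega

open MvPolynomial in
lemma pf_pair (S : Finset ℕ) (i : ℕ) (a : List ℕ) (ha : Even a.length) :
    Pf S (a ++ [i, i]) = Qtp S i i * Pf S a := by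
  have hassoc : a ++ [i, i] = (a ++ [i]) ++ [i] := by simp
  have hlen : (a ++ [i, i]).length = a.length + 1 + 1 := by
    simp only [List.length_append, List.length_cons, List.length_nil]
  have hgl : (a ++ [i, i]).getLast?.getD 0 = i := by rw [hassoc, List.getLast?_concat]; rfl
  have hdl : (a ++ [i, i]).dropLast = a ++ [i] := by rw [hassoc, List.dropLast_concat]
  rw [Pf_expand S _ (by omega), hlen, Nat.add_sub_cancel, hgl, hdl, Finset.sum_range_succ]
  have hfront : ∑ j ∈ Finset.range a.length,
      (-1 : MvPolynomial ℕ ℤ) ^ j * Qtp S ((a ++ [i, i]).getD j 0) i *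
        Pf S ((a ++ [i]).eraseIdx j) = 0 := by
    rw [← zero_sum S i a ha]
    refine Finset.sum_congr rfl fun j hj => ?_
    rw [Finset.mem_range] at hj
    rw [List.getD_append _ _ _ _ hj, List.eraseIdx_append_of_lt_length hj]
  rw [hfront, zero_add, List.getD_append_right _ _ _ _ (le_refl a.length), Nat.sub_self,
    List.getD_cons_zero, List.eraseIdx_append_of_length_le (le_refl a.length), Nat.sub_self,
    List.eraseIdx_cons_zero, List.append_nil, ha.neg_one_pow, one_mul]

open MvPolynomial in
lemma pf_insert (S : Finset ℕ) (i : ℕ) : ∀ (N : ℕ) (b a : List ℕ), b.length ≤ N →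
    Even (a.length + b.length) →
    Pf S (a ++ i :: i :: b) = Qtp S i i * Pf S (a ++ b) := by
  intro N
  induction N with
  | zero =>
    intro b a hb he
    have hb0 : b = [] := List.length_eq_zero_iff.mp (by omega)
    subst hb0
    simpa using pf_pair S i a (by simpa using he)
  | succ N IH =>
    intro b a hb he
    rcases eq_or_ne b [] with rfl | hbne
    · simpa using pf_pair S i a (by simpa using he)
    obtain ⟨c, t, rfl⟩ : ∃ c t, b = c ++ [t] :=
      ⟨b.dropLast, b.getLast hbne, (List.dropLast_append_getLast hbne).symm⟩
    have hbl : (c ++ [t]).length = c.length + 1 := by simp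
    have hcN : c.length ≤ N := by omega
    obtain ⟨w, hw⟩ := he
    have hwe : a.length + c.length + 1 = w + w := by omega
    have hm1 : a ++ i :: i :: (c ++ [t]) = (a ++ i :: i :: c) ++ [t] := by simp
    have hml : (a ++ i :: i :: (c ++ [t])).length = a.length + 2 + c.length + 1 := by
      simp only [List.length_append, List.length_cons, List.length_nil]; omega
    have hgl : (a ++ i :: i :: (c ++ [t])).getLast?.getD 0 = t := by
      rw [hm1, List.getLast?_concat]; rfl
    have hdl : (a ++ i :: i :: (c ++ [t])).dropLast = a ++ i :: i :: c := by
      rw [hm1, List.dropLast_concat]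
    -- front terms
    have hA : ∑ j ∈ Finset.range a.length,
        (-1 : MvPolynomial ℕ ℤ) ^ j * Qtp S ((a ++ i :: i :: (c ++ [t])).getD j 0) t *
          Pf S ((a ++ i :: i :: c).eraseIdx j)
        = ∑ j ∈ Finset.range a.length, Qtp S i i *
            ((-1 : MvPolynomial ℕ ℤ) ^ j * Qtp S (a.getD j 0) t * Pf S (a.eraseIdx j ++ c)) := by
      refine Finset.sum_congr rfl fun j hj => ?_
      rw [Finset.mem_range] at hj
      have hlae : (a.eraseIdx j).length = a.length - 1 := by
        rw [List.length_eraseIdx]; simp [hj]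
      rw [List.getD_append _ _ _ _ (by omega), List.eraseIdx_append_of_lt_length (by omega),
        IH c (a.eraseIdx j) hcN ⟨w - 1, by omega⟩]
      ring
    -- middle pair cancels
    have hmid : ((-1 : MvPolynomial ℕ ℤ) ^ (a.length + 0) *
          Qtp S ((a ++ i :: i :: (c ++ [t])).getD (a.length + 0) 0) t *
          Pf S ((a ++ i :: i :: c).eraseIdx (a.length + 0)))
        + ((-1 : MvPolynomial ℕ ℤ) ^ (a.length + 1) *
          Qtp S ((a ++ i :: i :: (c ++ [t])).getD (a.length + 1) 0) t *
          Pf S ((a ++ i :: i :: c).eraseIdx (a.length + 1))) = 0 := by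
      rw [List.getD_append_right _ _ _ _ (by omega), show a.length + 0 - a.length = 0 by omega,
        List.getD_cons_zero,
        List.getD_append_right _ _ _ _ (by omega), show a.length + 1 - a.length = 0 + 1 by omega,
        List.getD_cons_succ, List.getD_cons_zero,
        List.eraseIdx_append_of_length_le (by omega : a.length ≤ a.length + 0),
        show a.length + 0 - a.length = 0 by omega, List.eraseIdx_cons_zero,
        List.eraseIdx_append_of_length_le (by omega : a.length ≤ a.length + 1),
        show a.length + 1 - a.length = 0 + 1 by omega, List.eraseIdx_cons_succ,
        List.eraseIdx_cons_zero]
      ring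
    -- back terms
    have hB : ∑ j ∈ Finset.range c.length,
        (-1 : MvPolynomial ℕ ℤ) ^ (a.length + 2 + j) *
          Qtp S ((a ++ i :: i :: (c ++ [t])).getD (a.length + 2 + j) 0) t *
          Pf S ((a ++ i :: i :: c).eraseIdx (a.length + 2 + j))
        = ∑ j ∈ Finset.range c.length, Qtp S i i *
            ((-1 : MvPolynomial ℕ ℤ) ^ (a.length + j) * Qtp S (c.getD j 0) t *
              Pf S (a ++ c.eraseIdx j)) := by
      refine Finset.sum_congr rfl fun j hj => ?_
      rw [Finset.mem_range] at hj
      have hlce : (c.eraseIdx j).length = c.length - 1 := by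
        rw [List.length_eraseIdx]; simp [hj]
      rw [List.getD_append_right _ _ _ _ (by omega),
        show a.length + 2 + j - a.length = j + 1 + 1 by omega,
        List.getD_cons_succ, List.getD_cons_succ, List.getD_append _ _ _ _ hj,
        List.eraseIdx_append_of_length_le (by omega : a.length ≤ a.length + 2 + j),
        show a.length + 2 + j - a.length = j + 1 + 1 by omega,
        List.eraseIdx_cons_succ, List.eraseIdx_cons_succ,
        IH (c.eraseIdx j) a (by omega) ⟨w - 1, by omega⟩,
        show a.length + 2 + j = (a.length + j) + 2 by omega, pow_add, neg_one_sq, mul_one]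
      ring
    have hL : Pf S (a ++ i :: i :: (c ++ [t]))
        = Qtp S i i *
          ((∑ j ∈ Finset.range a.length,
              (-1 : MvPolynomial ℕ ℤ) ^ j * Qtp S (a.getD j 0) t * Pf S (a.eraseIdx j ++ c))
            + ∑ j ∈ Finset.range c.length,
              (-1 : MvPolynomial ℕ ℤ) ^ (a.length + j) * Qtp S (c.getD j 0) t *
                Pf S (a ++ c.eraseIdx j)) := by
      rw [Pf_expand S _ (by omega), hml, Nat.add_sub_cancel, hgl, hdl,
        Finset.sum_range_add, Finset.sum_range_add _ a.length 2,
        Finset.sum_range_succ, Finset.sum_range_one, hA, hB, hmid, add_zero,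
        ← Finset.mul_sum, ← Finset.mul_sum, ← mul_add]
    have hR : Pf S (a ++ (c ++ [t]))
        = (∑ j ∈ Finset.range a.length,
            (-1 : MvPolynomial ℕ ℤ) ^ j * Qtp S (a.getD j 0) t * Pf S (a.eraseIdx j ++ c))
          + ∑ j ∈ Finset.range c.length,
            (-1 : MvPolynomial ℕ ℤ) ^ (a.length + j) * Qtp S (c.getD j 0) t *
              Pf S (a ++ c.eraseIdx j) := by
      have hml' : (a ++ (c ++ [t])).length = (a.length + c.length) + 1 := by
        simp only [List.length_append, List.length_cons, List.length_nil]; omega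
      have hgl' : (a ++ (c ++ [t])).getLast?.getD 0 = t := by
        rw [show a ++ (c ++ [t]) = (a ++ c) ++ [t] by simp, List.getLast?_concat]; rfl
      have hdl' : (a ++ (c ++ [t])).dropLast = a ++ c := by
        rw [show a ++ (c ++ [t]) = (a ++ c) ++ [t] by simp, List.dropLast_concat]
      rw [Pf_expand S _ (by omega), hml', Nat.add_sub_cancel, hgl', hdl',
        Finset.sum_range_add]
      refine congrArg₂ (· + ·) ?_ ?_
      · refine Finset.sum_congr rfl fun j hj => ?_
        rw [Finset.mem_range] at hj
        rw [List.getD_append _ _ _ _ (by omega), List.eraseIdx_append_of_lt_length (by omega)]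
      · refine Finset.sum_congr rfl fun j hj => ?_
        rw [Finset.mem_range] at hj
        rw [List.getD_append_right _ _ _ _ (by omega),
          show a.length + j - a.length = j by omega, List.getD_append _ _ _ _ hj,
          List.eraseIdx_append_of_length_le (by omega : a.length ≤ a.length + j),
          show a.length + j - a.length = j by omega]
    rw [hL, hR]

lemma exists_split (i : ℕ) : ∀ (l : List ℕ), l.Pairwise (· ≥ ·) →
    ∃ a b : List ℕ, l = a ++ b ∧ (a ++ i :: i :: b).Pairwise (· ≥ ·) := by
  intro l
  induction l with
  | nil =>
    intro _
    refine ⟨[], [], rfl, ?_⟩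
    simp [List.pairwise_cons]
  | cons x xs IH =>
    intro hs
    rw [List.pairwise_cons] at hs
    obtain ⟨hx, hxs⟩ := hs
    by_cases hxi : i ≤ x
    · obtain ⟨a, b, hab, hsort⟩ := IH hxs
      refine ⟨x :: a, b, by rw [List.cons_append, hab], ?_⟩
      rw [List.cons_append, List.pairwise_cons]
      refine ⟨?_, hsort⟩
      intro y hy
      simp only [List.mem_append, List.mem_cons] at hy
      rcases hy with h | h | h | h
      · exact hx y (by rw [hab]; exact List.mem_append_left _ h)
      · omega
      · omega
      · exact hx y (by rw [hab]; exact List.mem_append_right _ h)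
    · refine ⟨[], x :: xs, by simp, ?_⟩
      have hall : ∀ y ∈ x :: xs, i ≥ y := by
        intro y hy
        rcases List.mem_cons.mp hy with rfl | hy'
        · omega
        · have := hx y hy'; omega
      rw [List.nil_append, List.pairwise_cons]
      refine ⟨?_, ?_⟩
      · intro y hy
        rcases List.mem_cons.mp hy with rfl | hy'
        · exact le_refl _
        · exact hall y hy'
      · rw [List.pairwise_cons]
        exact ⟨hall, List.pairwise_cons.mpr ⟨hx, hxs⟩⟩

lemma Qlam_eq (S : Finset ℕ) (l : List ℕ) :
    Qlam S l = Pf S (if Even l.length then l else l ++ [0]) := by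
  unfold Qlam
  apply Qpf_eq_Pf
  split_ifs
  · omega
  · simp only [List.length_append, List.length_cons, List.length_nil]; omega

end QtAux

/-- Factorization property: if `λ⁺ = λ ∪ (i,i)` is obtained from the partition
`λ` (all parts `≤ n`) by inserting two parts equal to `i`, then
`Q̃_{λ⁺} = Q̃_{i,i} · Q̃_λ` in `ℤ[x₁,…,x_n]`. -/
theorem Qtilde_insert_pair (n i : ℕ) (hi : i ≤ n) (lam lamPlus : List ℕ)
    (hlam : List.Pairwise (· ≥ ·) lam) (hle : ∀ a ∈ lam, a ≤ n)
    (hplus : List.Pairwise (· ≥ ·) lamPlus) (hperm : lamPlus.Perm (i :: i :: lam)) :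
    Qlam (Finset.range n) lamPlus
      = Qtp (Finset.range n) i i * Qlam (Finset.range n) lam := by
  obtain ⟨a, b, hab, hsort⟩ := QtAux.exists_split i lam hlam
  have p1 : (a ++ i :: i :: b).Perm (i :: (a ++ i :: b)) := List.perm_middle
  have p2 : (a ++ i :: b).Perm (i :: (a ++ b)) := List.perm_middle
  have hperm2 : lamPlus.Perm (a ++ i :: i :: b) := by
    refine hperm.trans ?_
    rw [hab]
    exact (p1.trans (p2.cons i)).symm
  haveI : IsAntisymm ℕ (· ≥ ·) := ⟨fun a b h1 h2 => le_antisymm h2 h1⟩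
  have hplusEq : lamPlus = a ++ i :: i :: b :=
    List.Perm.eq_of_pairwise (fun a b _ _ h1 h2 => le_antisymm h2 h1) hplus hsort hperm2
  have hlab : lam.length = a.length + b.length := by rw [hab, List.length_append]
  have hlplus : (a ++ i :: i :: b).length = a.length + b.length + 2 := by
    simp only [List.length_append, List.length_cons]; omega
  rw [hplusEq, QtAux.Qlam_eq, QtAux.Qlam_eq, hab]
  by_cases hev : Even lam.length
  · obtain ⟨w, hw⟩ := hev
    rw [if_pos (by rw [hlplus]; exact ⟨w + 1, by omega⟩),
      if_pos (by rw [← hab]; exact ⟨w, hw⟩)]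
    exact QtAux.pf_insert (Finset.range n) i b.length b a le_rfl ⟨w, by omega⟩
  · obtain ⟨w, hw⟩ := Nat.not_even_iff_odd.mp hev
    rw [if_neg (by rw [hlplus]; intro ⟨u, hu⟩; omega),
      if_neg (by rw [← hab]; exact hev)]
    have e1 : (a ++ i :: i :: b) ++ [0] = a ++ i :: i :: (b ++ [0]) := by simp
    have e2 : (a ++ b) ++ [0] = a ++ (b ++ [0]) := by simp
    rw [e1, e2]
    exact QtAux.pf_insert (Finset.range n) i (b ++ [0]).length (b ++ [0]) a le_rfl
      ⟨w + 1, by simp only [List.length_append, List.length_cons, List.length_nil]; omega⟩
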